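/- Let u : E → ℝ be measurable with P_t|u| < ∞ pointwise for all t ≥ 0, let α ≥ 0 and let c : E → [0,∞] be measurable such that |P_t u − u| ≤ t·c pointwise for every t ≥ 0 and b := sup_{t≥0} e^{-αt} P_t(|u| + c) is finite pointwise. Then for every β > α, sup_n V^β_{τ_n}(u)(x) < ∞ for every x ∈ E, where τ_n := {k/2^n : 0 ≤ k ≤ n·2^n}. -/

import Mathlib

open MeasureTheory ProbabilityTheory ENNReal Filter
open scoped NNReal

/-- A sub-Markovian semigroup of kernels on a measurable space `E`. -/
structure SubMarkovSemigroup (E : Type*) [MeasurableSpace E] where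
  P : ℝ≥0 → Kernel E E
  subMarkov : ∀ t x, P t x Set.univ ≤ 1
  map_zero : ∀ (f : E → ℝ≥0∞), Measurable f → ∀ x, ∫⁻ y, f y ∂(P 0 x) = f x
  map_add : ∀ (t s : ℝ≥0) (f : E → ℝ≥0∞), Measurable f → ∀ x,
      ∫⁻ y, f y ∂(P (t + s) x) = ∫⁻ y, ∫⁻ z, f z ∂(P s y) ∂(P t x)

/-- Action of the time-`t` kernel on real-valued functions: `P_t f = P_t f⁺ - P_t f⁻`. -/
noncomputable def SubMarkovSemigroup.act {E : Type*} [MeasurableSpace E]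
    (S : SubMarkovSemigroup E) (t : ℝ≥0) (f : E → ℝ) (x : E) : ℝ :=
  ∫ y, f y ∂(S.P t x)

/-- A finite partition `0 = t_0 ≤ t_1 ≤ … ≤ t_n < ∞` of `ℝ₊`. -/
structure FinPartition where
  n : ℕ
  t : Fin (n + 1) → ℝ≥0
  mono : Monotone t
  first : t 0 = 0

/-- `V_τ(u) = Σ_{i=1}^n P_{t_{i-1}} |u - P_{t_i - t_{i-1}} u| + P_{t_n}|u|`. -/
noncomputable def SubMarkovSemigroup.V {E : Type*} [MeasurableSpace E]
    (S : SubMarkovSemigroup E) (u : E → ℝ) (τ : FinPartition) (x : E) : ℝ :=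
  (∑ i : Fin τ.n, S.act (τ.t i.castSucc)
      (fun y => |u y - S.act (τ.t i.succ - τ.t i.castSucc) u y|) x)
  + S.act (τ.t (Fin.last τ.n)) (fun y => |u y|) x

/-- `V^α_τ(u) = Σ_{i=1}^n P^α_{t_{i-1}} |u - P^α_{t_i - t_{i-1}} u| + P^α_{t_n}|u|`,
where `P^α_t = e^{-αt} P_t`. -/
noncomputable def SubMarkovSemigroup.Valpha {E : Type*} [MeasurableSpace E]
    (S : SubMarkovSemigroup E) (α : ℝ) (u : E → ℝ) (τ : FinPartition) (x : E) : ℝ :=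
  (∑ i : Fin τ.n, Real.exp (-α * τ.t i.castSucc) * S.act (τ.t i.castSucc)
      (fun y => |u y - Real.exp (-α * ((τ.t i.succ : ℝ) - (τ.t i.castSucc : ℝ)))
        * S.act (τ.t i.succ - τ.t i.castSucc) u y|) x)
  + Real.exp (-α * τ.t (Fin.last τ.n)) * S.act (τ.t (Fin.last τ.n)) (fun y => |u y|) x

/-- The dyadic partition `τ_n = {k/2^n : 0 ≤ k ≤ n·2^n}`. -/
noncomputable def dyadicPartition (n : ℕ) : FinPartition where
  n := n * 2 ^ n
  t := fun i => (i : ℕ) / (2 ^ n : ℝ≥0)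
  mono := by
    intro i j hij
    have : ((i : ℕ) : ℝ≥0) ≤ ((j : ℕ) : ℝ≥0) := by exact_mod_cast hij
    exact div_le_div_of_nonneg_right this (by positivity)
  first := by simp

section AuxLemmas

variable {E : Type*} [MeasurableSpace E]

lemma ofReal_integral_le' (μ : Measure E) (f : E → ℝ) (hf : ∀ y, 0 ≤ f y) :
    ENNReal.ofReal (∫ y, f y ∂μ) ≤ ∫⁻ y, ENNReal.ofReal (f y) ∂μ := by
  by_cases hfi : Integrable f μ
  · exact le_of_eq (ofReal_integral_eq_lintegral_ofReal hfi (Filter.Eventually.of_forall hf))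
  · simp [integral_undef hfi]

lemma act_abs_le' (S : SubMarkovSemigroup E) (u : E → ℝ) (t : ℝ≥0) (y : E) :
    ENNReal.ofReal |S.act t u y| ≤ ∫⁻ z, ENNReal.ofReal |u z| ∂(S.P t y) := by
  have h1 : |S.act t u y| ≤ ∫ z, |u z| ∂(S.P t y) := by
    simpa [SubMarkovSemigroup.act, Real.norm_eq_abs] using
      norm_integral_le_integral_norm (μ := S.P t y) u
  exact le_trans (ENNReal.ofReal_le_ofReal h1) (ofReal_integral_le' _ _ fun _ => abs_nonneg _)

lemma ofReal_sum_le'' {ι : Type*} (s : Finset ι) (f : ι → ℝ) :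
    ENNReal.ofReal (∑ i ∈ s, f i) ≤ ∑ i ∈ s, ENNReal.ofReal (f i) := by
  classical
  induction s using Finset.induction with
  | empty => simp
  | @insert a s h ih =>
    rw [Finset.sum_insert h, Finset.sum_insert h]
    exact le_trans ENNReal.ofReal_add_le (add_le_add_right ih _)

end AuxLemmas

/-- If `|P_t u - u| ≤ t·c` pointwise and
`b := sup_{t≥0} e^{-αt} P_t(|u|+c)` is finite pointwise, then for every `β > α`,
`sup_n V^β_{τ_n}(u)(x) < ∞` for every `x`, with `τ_n = {k/2^n : 0 ≤ k ≤ n·2^n}`. -/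
theorem statement10 {E : Type*} [MeasurableSpace E] (S : SubMarkovSemigroup E)
    (u : E → ℝ) (hu : Measurable u)
    (hint : ∀ (t : ℝ≥0) (x : E), Integrable u (S.P t x))
    (α : ℝ) (hα : 0 ≤ α) (c : E → ℝ≥0∞) (hc : Measurable c)
    (h1 : ∀ (t : ℝ≥0) (x : E),
      ENNReal.ofReal |S.act t u x - u x| ≤ (t : ℝ≥0∞) * c x)
    (hb : ∀ x : E, (⨆ t : ℝ≥0,
      ENNReal.ofReal (Real.exp (-α * t)) *
        ∫⁻ y, (ENNReal.ofReal |u y| + c y) ∂(S.P t x)) < ∞) :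
    ∀ β : ℝ, α < β →
      ∀ x : E, (⨆ n : ℕ, ENNReal.ofReal (S.Valpha β u (dyadicPartition n) x)) < ∞ := by
  have hmu : Measurable fun z => ENNReal.ofReal |u z| := ENNReal.measurable_ofReal.comp hu.abs
  intro β hβ x
  have hβ0 : 0 < β := lt_of_le_of_lt hα hβ
  set γ : ℝ := β - α with hγdef
  have hγ : 0 < γ := sub_pos.2 hβ
  set B : ℝ≥0∞ := ⨆ t : ℝ≥0, ENNReal.ofReal (Real.exp (-α * t)) *
      ∫⁻ y, (ENNReal.ofReal |u y| + c y) ∂(S.P t x) with hBdef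
  have hBfin : B < ∞ := hb x
  have hBle : ∀ (t : ℝ≥0) (g : E → ℝ≥0∞), (∀ y, g y ≤ ENNReal.ofReal |u y| + c y) →
      ENNReal.ofReal (Real.exp (-β * t)) * ∫⁻ y, g y ∂(S.P t x)
        ≤ ENNReal.ofReal (Real.exp (-γ * t)) * B := by
    intro t g hg
    have he : ENNReal.ofReal (Real.exp (-β * t)) =
        ENNReal.ofReal (Real.exp (-γ * t)) * ENNReal.ofReal (Real.exp (-α * t)) := by
      rw [← ENNReal.ofReal_mul (Real.exp_nonneg _), ← Real.exp_add]
      congr 1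
      rw [hγdef]; ring
    rw [he, mul_assoc]
    refine mul_le_mul_right ?_ _
    refine le_trans (mul_le_mul_right (lintegral_mono hg) _) ?_
    rw [hBdef]
    exact le_iSup (fun t : ℝ≥0 => ENNReal.ofReal (Real.exp (-α * t)) *
      ∫⁻ y, (ENNReal.ofReal |u y| + c y) ∂(S.P t x)) t
  have hterm : ∀ (s dd : ℝ≥0), 0 < (dd:ℝ) → (dd:ℝ) ≤ 1 →
      ENNReal.ofReal (Real.exp (-β * s) *
          S.act s (fun y => |u y - Real.exp (-β * (dd:ℝ)) * S.act dd u y|) x)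
        ≤ ENNReal.ofReal ((dd:ℝ) * (1 + β * Real.exp β)) *
            (ENNReal.ofReal (Real.exp (-γ * s)) * B) := by
    intro s dd hdd0 hdd1
    set k : ℝ := Real.exp (-β * (dd:ℝ)) with hk
    have hk0 : 0 < k := Real.exp_pos _
    have hk1 : k ≤ 1 := Real.exp_le_one_iff.2 (by nlinarith)
    have hks : 1 - k ≤ β * dd := by
      have h' := Real.add_one_le_exp (-β * (dd:ℝ))
      rw [← hk] at h'
      linarith
    have hpt : ∀ y, ENNReal.ofReal |u y - k * S.act dd u y|
        ≤ (dd : ℝ≥0∞) * c y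
          + ENNReal.ofReal (β * dd) * ∫⁻ z, ENNReal.ofReal |u z| ∂(S.P dd y) := by
      intro y
      have habs : |u y - k * S.act dd u y|
          ≤ |S.act dd u y - u y| + (1 - k) * |S.act dd u y| := by
        have h' : u y - k * S.act dd u y = (u y - S.act dd u y) + (1 - k) * S.act dd u y := by
          ring
        rw [h']
        refine (abs_add_le _ _).trans ?_
        rw [abs_mul, abs_of_nonneg (by linarith : (0:ℝ) ≤ 1 - k), abs_sub_comm]
      refine le_trans (ENNReal.ofReal_le_ofReal habs) ?_
      refine le_trans ENNReal.ofReal_add_le (add_le_add (h1 dd y) ?_)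
      rw [ENNReal.ofReal_mul (by linarith : (0:ℝ) ≤ 1 - k)]
      exact mul_le_mul' (ENNReal.ofReal_le_ofReal hks) (act_abs_le' S u dd y)
    have hint1 : ∫⁻ y, ENNReal.ofReal |u y - k * S.act dd u y| ∂(S.P s x)
        ≤ (dd : ℝ≥0∞) * ∫⁻ y, c y ∂(S.P s x)
          + ENNReal.ofReal (β * dd) * ∫⁻ y, ENNReal.ofReal |u y| ∂(S.P (s + dd) x) := by
      refine le_trans (lintegral_mono hpt) ?_
      rw [lintegral_add_left (hc.const_mul _),
          lintegral_const_mul' _ _ ENNReal.coe_ne_top,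
          lintegral_const_mul' _ _ ENNReal.ofReal_ne_top,
          ← S.map_add s dd _ hmu x]
    have h2 : ENNReal.ofReal (Real.exp (-β * s)
          * S.act s (fun y => |u y - k * S.act dd u y|) x)
        ≤ ENNReal.ofReal (Real.exp (-β * s)) *
            ∫⁻ y, ENNReal.ofReal |u y - k * S.act dd u y| ∂(S.P s x) := by
      rw [ENNReal.ofReal_mul (Real.exp_nonneg _)]
      exact mul_le_mul_right (ofReal_integral_le' _ _ fun y => abs_nonneg _) _
    refine le_trans h2 ?_
    refine le_trans (mul_le_mul_right hint1 _) ?_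
    rw [mul_add]
    have hp1 : ENNReal.ofReal (Real.exp (-β * s)) * ((dd:ℝ≥0∞) * ∫⁻ y, c y ∂(S.P s x))
        ≤ (dd:ℝ≥0∞) * (ENNReal.ofReal (Real.exp (-γ * s)) * B) := by
      rw [← mul_assoc, mul_comm (ENNReal.ofReal _) ((dd:ℝ≥0∞)), mul_assoc]
      exact mul_le_mul_right (hBle s c fun y => le_add_self) _
    have hp2 : ENNReal.ofReal (Real.exp (-β * s)) *
          (ENNReal.ofReal (β * dd) * ∫⁻ y, ENNReal.ofReal |u y| ∂(S.P (s + dd) x))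
        ≤ ENNReal.ofReal ((dd:ℝ) * (β * Real.exp β)) *
            (ENNReal.ofReal (Real.exp (-γ * s)) * B) := by
      have hsplit : ENNReal.ofReal (Real.exp (-β * s)) =
          ENNReal.ofReal (Real.exp (β * dd)) *
            ENNReal.ofReal (Real.exp (-β * ((s:ℝ) + (dd:ℝ)))) := by
        rw [← ENNReal.ofReal_mul (Real.exp_nonneg _), ← Real.exp_add]
        congr 1; ring
      have hre : ENNReal.ofReal (Real.exp (β * dd)) *
            ENNReal.ofReal (Real.exp (-β * ((s:ℝ) + (dd:ℝ)))) *
          (ENNReal.ofReal (β * dd) * ∫⁻ y, ENNReal.ofReal |u y| ∂(S.P (s + dd) x))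
          = (ENNReal.ofReal (β * dd) * ENNReal.ofReal (Real.exp (β * dd))) *
            (ENNReal.ofReal (Real.exp (-β * ((s:ℝ) + (dd:ℝ)))) *
              ∫⁻ y, ENNReal.ofReal |u y| ∂(S.P (s + dd) x)) := by ring
      rw [hsplit, hre]
      have hf1 : ENNReal.ofReal (β * dd) * ENNReal.ofReal (Real.exp (β * dd))
          ≤ ENNReal.ofReal ((dd:ℝ) * (β * Real.exp β)) := by
        rw [← ENNReal.ofReal_mul (by positivity)]
        refine ENNReal.ofReal_le_ofReal ?_
        have he1 : Real.exp (β * dd) ≤ Real.exp β :=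
          Real.exp_le_exp.2 (by nlinarith)
        nlinarith [Real.exp_pos (β * (dd:ℝ)), Real.exp_pos β]
      have hf2 : ENNReal.ofReal (Real.exp (-β * ((s:ℝ) + (dd:ℝ)))) *
            ∫⁻ y, ENNReal.ofReal |u y| ∂(S.P (s + dd) x)
          ≤ ENNReal.ofReal (Real.exp (-γ * s)) * B := by
        have := hBle (s + dd) (fun y => ENNReal.ofReal |u y|) (fun y => le_self_add)
        push_cast at this
        refine le_trans this ?_
        refine mul_le_mul_left (ENNReal.ofReal_le_ofReal (Real.exp_le_exp.2 ?_)) _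
        have : (0:ℝ) ≤ (dd:ℝ) := dd.coe_nonneg
        nlinarith
      exact mul_le_mul' hf1 hf2
    refine le_trans (add_le_add hp1 hp2) ?_
    rw [← add_mul]
    refine mul_le_mul_left ?_ _
    rw [← ENNReal.ofReal_coe_nnreal, ← ENNReal.ofReal_add dd.coe_nonneg (by positivity)]
    exact ENNReal.ofReal_le_ofReal (le_of_eq (by ring))
  set C1 : ℝ := (1 + β * Real.exp β) * (Real.exp γ / γ) with hC1
  have hmain : ∀ n : ℕ, ENNReal.ofReal (S.Valpha β u (dyadicPartition n) x)
      ≤ ENNReal.ofReal C1 * B + B := by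
    intro n
    set τ : FinPartition := dyadicPartition n with hτ
    set δ : ℝ≥0 := (2 ^ n : ℝ≥0)⁻¹ with hδ
    have hδr : (δ:ℝ) = ((2:ℝ) ^ n)⁻¹ := by rw [hδ]; push_cast; ring
    have hδ0 : 0 < (δ:ℝ) := by rw [hδr]; positivity
    have hδ1 : (δ:ℝ) ≤ 1 := by
      rw [hδr]
      rw [inv_le_one_iff₀]
      right
      exact one_le_pow₀ (by norm_num)
    have hsub : ∀ i : Fin τ.n, τ.t i.succ - τ.t i.castSucc = δ := by
      intro i
      show ((i.succ : ℕ) : ℝ≥0) / 2 ^ n - ((i.castSucc : ℕ) : ℝ≥0) / 2 ^ n = δ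
      rw [Fin.val_succ, Fin.coe_castSucc]
      push_cast
      rw [div_eq_mul_inv, div_eq_mul_inv, ← tsub_mul, add_tsub_cancel_left, one_mul, hδ]
    have hsubr : ∀ i : Fin τ.n, ((τ.t i.succ : ℝ)) - ((τ.t i.castSucc : ℝ)) = (δ:ℝ) := by
      intro i
      have : ((τ.t i.succ : ℝ≥0) : ℝ) = ((i:ℕ) + 1) / 2 ^ n := by
        show (((((i.succ : ℕ) : ℝ≥0)) / 2 ^ n : ℝ≥0) : ℝ) = _
        rw [Fin.val_succ]; push_cast; ring
      rw [this]
      have : ((τ.t i.castSucc : ℝ≥0) : ℝ) = (i:ℕ) / 2 ^ n := by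
        show (((((i.castSucc : ℕ) : ℝ≥0)) / 2 ^ n : ℝ≥0) : ℝ) = _
        rw [Fin.coe_castSucc]; push_cast; ring
      rw [this, hδr]
      field_simp
      ring
    have hcast : ∀ i : Fin τ.n, ((τ.t i.castSucc : ℝ)) = (i:ℕ) * (δ:ℝ) := by
      intro i
      show (((((i.castSucc : ℕ) : ℝ≥0)) / 2 ^ n : ℝ≥0) : ℝ) = _
      rw [Fin.coe_castSucc, hδr]; push_cast; ring
    show ENNReal.ofReal ((∑ i : Fin τ.n, Real.exp (-β * τ.t i.castSucc) * S.act (τ.t i.castSucc)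
        (fun y => |u y - Real.exp (-β * ((τ.t i.succ : ℝ) - (τ.t i.castSucc : ℝ)))
          * S.act (τ.t i.succ - τ.t i.castSucc) u y|) x)
      + Real.exp (-β * τ.t (Fin.last τ.n)) * S.act (τ.t (Fin.last τ.n)) (fun y => |u y|) x)
      ≤ ENNReal.ofReal C1 * B + B
    refine le_trans ENNReal.ofReal_add_le (add_le_add ?_ ?_)
    · -- sum part
      refine le_trans (ofReal_sum_le'' _ _) ?_
      set r : ℝ≥0∞ := ENNReal.ofReal (Real.exp (-γ * δ)) with hr
      have hterm' : ∀ i : Fin τ.n,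
          ENNReal.ofReal (Real.exp (-β * τ.t i.castSucc) * S.act (τ.t i.castSucc)
            (fun y => |u y - Real.exp (-β * ((τ.t i.succ : ℝ) - (τ.t i.castSucc : ℝ)))
              * S.act (τ.t i.succ - τ.t i.castSucc) u y|) x)
          ≤ ENNReal.ofReal ((δ:ℝ) * (1 + β * Real.exp β)) * (r ^ (i:ℕ) * B) := by
        intro i
        simp only [hsub i, hsubr i]
        refine le_trans (hterm (τ.t i.castSucc) δ hδ0 hδ1) ?_
        rw [hcast i]
        have hpow : ENNReal.ofReal (Real.exp (-γ * ((i:ℕ) * (δ:ℝ)))) = r ^ (i:ℕ) := by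
          rw [hr, ← ENNReal.ofReal_pow (Real.exp_nonneg _), ← Real.exp_nat_mul]
          congr 1; ring
        rw [hpow]
      refine le_trans (Finset.sum_le_sum fun i _ => hterm' i) ?_
      rw [← Finset.mul_sum, ← Finset.sum_mul]
      have hgeo : ∑ i : Fin τ.n, r ^ (i:ℕ) ≤ (1 - r)⁻¹ := by
        rw [Fin.sum_univ_eq_sum_range (fun j => r ^ j)]
        exact le_trans (ENNReal.sum_le_tsum _) (le_of_eq (ENNReal.tsum_geometric r))
      refine le_trans (mul_le_mul_right (mul_le_mul_left hgeo B) _) ?_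
      rw [← mul_assoc]
      refine mul_le_mul_left ?_ B
      have hrlt : Real.exp (-γ * (δ:ℝ)) < 1 := Real.exp_lt_one_iff.2 (by nlinarith)
      have h1r : (1:ℝ≥0∞) - r = ENNReal.ofReal (1 - Real.exp (-γ * (δ:ℝ))) := by
        rw [hr, ENNReal.ofReal_sub _ (Real.exp_nonneg _), ENNReal.ofReal_one]
      have hpos : (0:ℝ) < 1 - Real.exp (-γ * (δ:ℝ)) := by linarith
      rw [h1r, ← ENNReal.ofReal_inv_of_pos hpos, ← ENNReal.ofReal_mul (by positivity)]
      refine ENNReal.ofReal_le_ofReal ?_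
      have key : γ * δ * Real.exp (-γ) ≤ 1 - Real.exp (-γ * δ) := by
        have ha := Real.add_one_le_exp (γ * (δ:ℝ))
        have hb' : Real.exp (-γ * δ) * Real.exp (γ * δ) = 1 := by
          rw [← Real.exp_add]; simp
        have hc' : Real.exp (-γ) ≤ Real.exp (-γ * δ) :=
          Real.exp_le_exp.2 (by nlinarith)
        nlinarith [Real.exp_pos (-γ * (δ:ℝ)), Real.exp_pos (-γ),
          mul_le_mul_of_nonneg_left ha (Real.exp_pos (-γ * (δ:ℝ))).le]
      have hm : (1 - Real.exp (-γ * (δ:ℝ)))⁻¹ ≤ (γ * δ * Real.exp (-γ))⁻¹ :=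
        inv_anti₀ (by positivity) key
      have h5 : (δ:ℝ) * (1 + β * Real.exp β) * (γ * δ * Real.exp (-γ))⁻¹ = C1 := by
        rw [hC1, Real.exp_neg]
        field_simp
      calc (δ:ℝ) * (1 + β * Real.exp β) * (1 - Real.exp (-γ * (δ:ℝ)))⁻¹
          ≤ (δ:ℝ) * (1 + β * Real.exp β) * (γ * δ * Real.exp (-γ))⁻¹ := by
            have hnn : (0:ℝ) ≤ (δ:ℝ) * (1 + β * Real.exp β) := by positivity
            exact mul_le_mul_of_nonneg_left hm hnn
        _ = C1 := h5
    · -- last term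
      set T : ℝ≥0 := τ.t (Fin.last τ.n) with hT
      have hl1 : ENNReal.ofReal (Real.exp (-β * T) * S.act T (fun y => |u y|) x)
          ≤ ENNReal.ofReal (Real.exp (-β * T)) *
              ∫⁻ y, ENNReal.ofReal |u y| ∂(S.P T x) := by
        rw [ENNReal.ofReal_mul (Real.exp_nonneg _)]
        refine mul_le_mul_right ?_ _
        exact ofReal_integral_le' _ _ fun y => abs_nonneg _
      refine le_trans hl1 ?_
      refine le_trans (hBle T (fun y => ENNReal.ofReal |u y|) fun y => le_self_add) ?_
      have : ENNReal.ofReal (Real.exp (-γ * T)) ≤ 1 := by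
        refine ENNReal.ofReal_le_one.2 (Real.exp_le_one_iff.2 ?_)
        have : (0:ℝ) ≤ (T:ℝ) := T.coe_nonneg
        nlinarith
      calc ENNReal.ofReal (Real.exp (-γ * T)) * B ≤ 1 * B := mul_le_mul_left this B
        _ = B := one_mul B
  refine lt_of_le_of_lt (iSup_le hmain) ?_
  exact ENNReal.add_lt_top.2 ⟨ENNReal.mul_lt_top ENNReal.ofReal_lt_top hBfin, hBfin⟩
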